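/- arXiv:0805.3761 — 5 statements merged into one kernel-verified Lean document; each statement's English description precedes it below -/
import Mathlib

section
/- Any nonconstant meromorphic function on a compact Riemann surface of genus γ ≥ 1 has at least three distinct branch points. -/
/-- Any nonconstant meromorphic function on a compact Riemann surface of genus
`γ ≥ 1` has at least three distinct branch points.  Following the argument in the
paper, the statement is expressed through the Riemann–Hurwitz data: `d` is the
degree of the map (nonzero since the map is nonconstant), `ν k` are the
(positive) branching orders at the `N` branch points, satisfying the
Riemann–Hurwitz relation `2 d = 2 - 2 γ + Σ ν k` and the multiplicity bound
`d ≥ ν k + 1`.  The conclusion is `N ≥ 3`. -/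
theorem three_branch_points_of_genus_ge_one
    (γ N d : ℕ) (ν : Fin N → ℕ)
    (hγ : 1 ≤ γ) (hd : 1 ≤ d)
    (hν : ∀ k, 1 ≤ ν k)
    (hRH : 2 * (d : ℤ) = 2 - 2 * (γ : ℤ) + ∑ k, (ν k : ℤ))
    (hmult : ∀ k, (ν k) + 1 ≤ d) :
    3 ≤ N := by
  by_contra h
  push_neg at h
  have hN2 : (N : ℤ) ≤ 2 := by exact_mod_cast Nat.lt_succ_iff.mp h
  have hsum : ∑ k, (ν k : ℤ) ≤ (N : ℤ) * ((d : ℤ) - 1) := by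
    calc ∑ k, (ν k : ℤ) ≤ ∑ _k : Fin N, ((d : ℤ) - 1) :=
          Finset.sum_le_sum (fun k _ => by have := hmult k; push_cast; omega)
      _ = (N : ℤ) * ((d : ℤ) - 1) := by
          simp [Finset.sum_const, Finset.card_univ, mul_comm]
          ring
  have hd1 : (0 : ℤ) ≤ (d : ℤ) - 1 := by
    have h1 : (1 : ℤ) ≤ (d : ℤ) := by exact_mod_cast hd
    linarith
  have h2 : (N : ℤ) * ((d : ℤ) - 1) ≤ 2 * ((d : ℤ) - 1) :=
    mul_le_mul_of_nonneg_right hN2 hd1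
  have hγ' : (1 : ℤ) ≤ (γ : ℤ) := by exact_mod_cast hγ
  linarith
end

section
/- Let m₂, m₃, m₄ be positive integers with m₂ ≤ m₄, m₃ ≤ m₄, and m₂ + m₃ ≠ m₄. Define φ(α₂, α₃) = √(m₂² − 8α₂²) + √(m₃² − 8α₃²) + √(m₄² − 8(α₂+α₃)²) on the open region D = {(α₂,α₃) : 0 < α₂ < m₂/√8, 0 < α₃ < m₃/√8, 0 < α₂ + α₃ < m₄/√8}. Then φ(α₂, α₃) > 1 for all (α₂, α₃) ∈ D. -/
open Real

lemma sqrt_sub_lt_sqrt_sq_sub_sq (m w : ℝ) (hm : 1 ≤ m) (hw : 0 < w) (hwm : w < m) :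
    Real.sqrt (m - w) < Real.sqrt (m^2 - w^2) := by
  apply Real.sqrt_lt_sqrt (by linarith)
  nlinarith

/-- Let `m₂, m₃, m₄` be positive integers with `m₂ ≤ m₄`, `m₃ ≤ m₄`, and
`m₂ + m₃ ≠ m₄`.  Then the function
`φ(α₂, α₃) = √(m₂² − 8α₂²) + √(m₃² − 8α₃²) + √(m₄² − 8(α₂+α₃)²)`
satisfies `φ > 1` on the open region
`D = {(α₂,α₃) : 0 < α₂ < m₂/√8, 0 < α₃ < m₃/√8, 0 < α₂ + α₃ < m₄/√8}`. -/
theorem sqrt_sum_gt_one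
    (m₂ m₃ m₄ : ℤ) (hm₂ : 1 ≤ m₂) (hm₃ : 1 ≤ m₃) (hm₄ : 1 ≤ m₄)
    (h24 : m₂ ≤ m₄) (h34 : m₃ ≤ m₄) (hne : m₂ + m₃ ≠ m₄)
    (α₂ α₃ : ℝ)
    (h2pos : 0 < α₂) (h2lt : α₂ < (m₂ : ℝ) / Real.sqrt 8)
    (h3pos : 0 < α₃) (h3lt : α₃ < (m₃ : ℝ) / Real.sqrt 8)
    (hspos : 0 < α₂ + α₃) (hslt : α₂ + α₃ < (m₄ : ℝ) / Real.sqrt 8) :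
    1 < Real.sqrt ((m₂ : ℝ)^2 - 8 * α₂^2)
        + Real.sqrt ((m₃ : ℝ)^2 - 8 * α₃^2)
        + Real.sqrt ((m₄ : ℝ)^2 - 8 * (α₂ + α₃)^2) := by
  have hs8pos : (0:ℝ) < Real.sqrt 8 := Real.sqrt_pos.mpr (by norm_num)
  have hs8sq : (Real.sqrt 8)^2 = 8 := Real.sq_sqrt (by norm_num)
  set s8 := Real.sqrt 8 with hs8
  -- the rescaled variables
  have hw2 : s8 * α₂ < (m₂ : ℝ) := by
    have := (lt_div_iff₀ hs8pos).mp h2lt; linarith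
  have hw3 : s8 * α₃ < (m₃ : ℝ) := by
    have := (lt_div_iff₀ hs8pos).mp h3lt; linarith
  have hw4 : s8 * (α₂ + α₃) < (m₄ : ℝ) := by
    have := (lt_div_iff₀ hs8pos).mp hslt; linarith
  have hm₂' : (1:ℝ) ≤ (m₂:ℝ) := by exact_mod_cast hm₂
  have hm₃' : (1:ℝ) ≤ (m₃:ℝ) := by exact_mod_cast hm₃
  have hm₄' : (1:ℝ) ≤ (m₄:ℝ) := by exact_mod_cast hm₄
  have e2 : (m₂ : ℝ)^2 - 8 * α₂^2 = (m₂:ℝ)^2 - (s8 * α₂)^2 := by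
    rw [mul_pow, hs8sq]
  have e3 : (m₃ : ℝ)^2 - 8 * α₃^2 = (m₃:ℝ)^2 - (s8 * α₃)^2 := by
    rw [mul_pow, hs8sq]
  have e4 : (m₄ : ℝ)^2 - 8 * (α₂ + α₃)^2 = (m₄:ℝ)^2 - (s8 * (α₂ + α₃))^2 := by
    rw [mul_pow, hs8sq]
  rw [e2, e3, e4]
  have l2 := sqrt_sub_lt_sqrt_sq_sub_sq (m₂:ℝ) (s8 * α₂) hm₂'
    (by positivity) hw2
  have l3 := sqrt_sub_lt_sqrt_sq_sub_sq (m₃:ℝ) (s8 * α₃) hm₃'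
    (by positivity) hw3
  have l4 := sqrt_sub_lt_sqrt_sq_sub_sq (m₄:ℝ) (s8 * (α₂ + α₃)) hm₄'
    (by positivity) hw4
  set a : ℝ := (m₂:ℝ) - s8 * α₂ with ha_def
  set b : ℝ := (m₃:ℝ) - s8 * α₃ with hb_def
  set u : ℝ := (m₄:ℝ) - s8 * (α₂ + α₃) with hu_def
  have hapos : 0 < a := by simp only [ha_def]; linarith
  have hbpos : 0 < b := by simp only [hb_def]; linarith
  have hupos : 0 < u := by simp only [hu_def]; linarith
  have hkey : a + b - u = ((m₂ + m₃ - m₄ : ℤ) : ℝ) := by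
    simp only [ha_def, hb_def, hu_def]; push_cast; ring
  have sa := Real.sqrt_nonneg a
  have sb := Real.sqrt_nonneg b
  have su := Real.sqrt_nonneg u
  rcases hne.lt_or_gt with hlt | hgt
  · -- m₂ + m₃ < m₄ : then u > a + b + 1 > 1
    have hk : (m₂ + m₃ - m₄ : ℤ) ≤ -1 := by omega
    have hk' : ((m₂ + m₃ - m₄ : ℤ) : ℝ) ≤ -1 := by exact_mod_cast hk
    have hu1 : 1 < u := by linarith
    have : 1 < Real.sqrt u := by
      rw [show (1:ℝ) = Real.sqrt 1 by simp]
      exact Real.sqrt_lt_sqrt (by norm_num) hu1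
    linarith
  · -- m₄ < m₂ + m₃ : then a + b > u + 1 > 1
    have hk : (1:ℤ) ≤ m₂ + m₃ - m₄ := by omega
    have hk' : (1:ℝ) ≤ ((m₂ + m₃ - m₄ : ℤ) : ℝ) := by exact_mod_cast hk
    have hab : 1 < a + b := by linarith
    have h1 : 1 < Real.sqrt a + Real.sqrt b := by
      nlinarith [Real.sq_sqrt hapos.le, Real.sq_sqrt hbpos.le,
        mul_nonneg sa sb]
    linarith
end

section
/- Let μ ∈ ℝ with −1 < μ < 0 and q ∈ ℂ ∖ {0,1}, a, b ∈ ℂ ∖ {0,1,q} with a ≠ b. If (μ+1)(a²+b²) − (μq+1)(a+b) − 2ab + 2q = 0, (μ+1)(a+b)ab − 2(μq+q+2)ab + 2q(a+b) = 0, and μ + 2 − 2/a − 2/b = 0 all hold, then a = b = q = 4/(μ+2), contradicting a ≠ b. Hence the three equations have no solution with a ≠ b. -/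
/-- Let `μ ∈ (−1, 0)` be real, `q ∈ ℂ ∖ {0,1}`, and `a, b ∈ ℂ ∖ {0,1,q}` with
`a ≠ b`.  Then the three equations
`(μ+1)(a²+b²) − (μq+1)(a+b) − 2ab + 2q = 0`,
`(μ+1)(a+b)ab − 2(μq+q+2)ab + 2q(a+b) = 0`, and
`μ + 2 − 2/a − 2/b = 0`
cannot hold simultaneously (their only common solution is
`a = b = q = 4/(μ+2)`, contradicting `a ≠ b`). -/
theorem no_solution_O0_neg2_neg3
    (μ : ℝ) (hμ₁ : -1 < μ) (hμ₂ : μ < 0)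
    (q a b : ℂ)
    (hq0 : q ≠ 0) (hq1 : q ≠ 1)
    (ha0 : a ≠ 0) (ha1 : a ≠ 1) (haq : a ≠ q)
    (hb0 : b ≠ 0) (hb1 : b ≠ 1) (hbq : b ≠ q)
    (hab : a ≠ b)
    (h1 : ((μ : ℂ) + 1) * (a ^ 2 + b ^ 2) - ((μ : ℂ) * q + 1) * (a + b)
        - 2 * a * b + 2 * q = 0)
    (h2 : ((μ : ℂ) + 1) * (a + b) * (a * b) - 2 * ((μ : ℂ) * q + q + 2) * (a * b)
        + 2 * q * (a + b) = 0)
    (h3 : (μ : ℂ) + 2 - 2 / a - 2 / b = 0) :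
    False := by
  have hm1 : (μ : ℂ) + 1 ≠ 0 := by
    have h : ((μ + 1 : ℝ) : ℂ) ≠ 0 := by
      exact_mod_cast (by linarith : (μ + 1 : ℝ) ≠ 0)
    simpa using h
  have hm2 : (μ : ℂ) + 2 ≠ 0 := by
    have h : ((μ + 2 : ℝ) : ℂ) ≠ 0 := by
      exact_mod_cast (by linarith : (μ + 2 : ℝ) ≠ 0)
    simpa using h
  -- clear denominators in h3
  have h3' : ((μ : ℂ) + 2) * (a * b) - 2 * (a + b) = 0 := by
    field_simp at h3
    linear_combination h3
  -- a + b ≠ 0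
  have hs : a + b ≠ 0 := by
    intro h
    have : a * b = 0 := by
      have := mul_left_cancel₀ hm2 (by linear_combination h3' + 2 * h : ((μ : ℂ) + 2) * (a * b) = ((μ : ℂ) + 2) * 0)
      simpa using this
    rcases mul_eq_zero.mp this with h | h
    · exact ha0 h
    · exact hb0 h
  -- eliminate p from h2
  have hE : (((μ : ℂ) + 1) * (a + b) - ((μ : ℂ) * q + 4)) * (a + b) = 0 := by
    linear_combination (((μ : ℂ) + 2) / 2) * h2
      - (((μ : ℂ) + 1) * (a + b) / 2 - ((μ : ℂ) * q + q + 2)) * h3'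
  have hE' : ((μ : ℂ) + 1) * (a + b) - ((μ : ℂ) * q + 4) = 0 := by
    rcases mul_eq_zero.mp hE with h | h
    · exact h
    · exact absurd h hs
  -- eliminate p from h1
  have hG1 : ((μ : ℂ) + 1) * (a + b) ^ 2 - ((μ : ℂ) * q + 5) * (a + b) + 2 * q = 0 := by
    linear_combination h1 + 2 * h3'
  -- q (μ+2) = 4
  have hq' : q * ((μ : ℂ) + 2) - 4 = 0 := by
    linear_combination ((μ : ℂ) + 1) * hG1 - (((μ : ℂ) + 1) * (a + b) - 1) * hE'
  -- (μ+2)(a+b) = 8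
  have hs2 : ((μ : ℂ) + 2) * (a + b) - 8 = 0 := by
    have h := mul_left_cancel₀ hm1
      (by linear_combination ((μ : ℂ) + 2) * hE' + (μ : ℂ) * hq' :
        ((μ : ℂ) + 1) * (((μ : ℂ) + 2) * (a + b) - 8) = ((μ : ℂ) + 1) * 0)
    simpa using h
  -- (a - b)^2 = 0
  have hfin : ((μ : ℂ) + 2) ^ 2 * (a - b) ^ 2 = 0 := by
    linear_combination ((μ : ℂ) + 2) * (a + b) * hs2 - 4 * ((μ : ℂ) + 2) * h3'
  have : (a - b) ^ 2 = 0 := by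
    rcases mul_eq_zero.mp hfin with h | h
    · exact absurd (pow_eq_zero_iff (by norm_num) |>.mp h) hm2
    · exact h
  exact hab (sub_eq_zero.mp (pow_eq_zero_iff (by norm_num) |>.mp this))
end

section
/- Let μ ∈ (−1, 0) be real. The residue conditions μ/a + 3/(a−1) − 2/(a−b) = 0 and μ/b + 3/(b−1) − 2/(b−a) = 0 (with a ≠ b, a, b ∉ {0, 1}) are solved exactly by a = (−2+μ+μ² + √2·√(2−μ−μ²))/((μ+1)(μ+2)) and b = (−2+μ+μ² − √2·√(2−μ−μ²))/((μ+1)(μ+2)) (up to swapping a and b). -/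
/-- Let `μ ∈ (−1, 0)` be real.  For distinct `a, b ∈ ℂ ∖ {0, 1}`, the residue
conditions `μ/a + 3/(a−1) − 2/(a−b) = 0` and `μ/b + 3/(b−1) − 2/(b−a) = 0`
hold if and only if (up to swapping `a` and `b`)
`a = (−2+μ+μ² + √2·√(2−μ−μ²))/((μ+1)(μ+2))` and
`b = (−2+μ+μ² − √2·√(2−μ−μ²))/((μ+1)(μ+2))`. -/
theorem residue_conditions_solution
    (μ : ℝ) (hμ₁ : -1 < μ) (hμ₂ : μ < 0)
    (a b : ℂ) (hab : a ≠ b)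
    (ha0 : a ≠ 0) (ha1 : a ≠ 1) (hb0 : b ≠ 0) (hb1 : b ≠ 1) :
    ((μ : ℂ) / a + 3 / (a - 1) - 2 / (a - b) = 0
      ∧ (μ : ℂ) / b + 3 / (b - 1) - 2 / (b - a) = 0)
    ↔ ((a = (-2 + (μ : ℂ) + (μ : ℂ) ^ 2
            + (Real.sqrt 2 : ℂ) * (Real.sqrt (2 - μ - μ ^ 2) : ℂ))
              / (((μ : ℂ) + 1) * ((μ : ℂ) + 2))
        ∧ b = (-2 + (μ : ℂ) + (μ : ℂ) ^ 2
            - (Real.sqrt 2 : ℂ) * (Real.sqrt (2 - μ - μ ^ 2) : ℂ))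
              / (((μ : ℂ) + 1) * ((μ : ℂ) + 2)))
      ∨ (b = (-2 + (μ : ℂ) + (μ : ℂ) ^ 2
            + (Real.sqrt 2 : ℂ) * (Real.sqrt (2 - μ - μ ^ 2) : ℂ))
              / (((μ : ℂ) + 1) * ((μ : ℂ) + 2))
        ∧ a = (-2 + (μ : ℂ) + (μ : ℂ) ^ 2
            - (Real.sqrt 2 : ℂ) * (Real.sqrt (2 - μ - μ ^ 2) : ℂ))
              / (((μ : ℂ) + 1) * ((μ : ℂ) + 2)))) := by
  have hpos : (0:ℝ) < 2 - μ - μ ^ 2 := by nlinarith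
  set m : ℂ := (μ : ℂ) with hm
  set r : ℂ := (Real.sqrt 2 : ℂ) * (Real.sqrt (2 - μ - μ ^ 2) : ℂ) with hrdef
  have hm1 : m + 1 ≠ 0 := by
    intro h
    have h' := congrArg Complex.re h
    simp [hm] at h'
    linarith
  have hm2 : m + 2 ≠ 0 := by
    intro h
    have h' := congrArg Complex.re h
    simp [hm] at h'
    linarith
  have hd : (m + 1) * (m + 2) ≠ 0 := mul_ne_zero hm1 hm2
  have hr : r ^ 2 = 2 * (2 - m - m ^ 2) := by
    have h2 : (Real.sqrt 2 : ℝ) ^ 2 = 2 := Real.sq_sqrt (by norm_num)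
    have h3 : (Real.sqrt (2 - μ - μ ^ 2)) ^ 2 = 2 - μ - μ ^ 2 := Real.sq_sqrt hpos.le
    rw [hrdef, hm, mul_pow, ← Complex.ofReal_pow, ← Complex.ofReal_pow, h2, h3]
    push_cast
    ring
  have hr0 : r ≠ 0 := by
    rw [hrdef]
    exact mul_ne_zero
      (Complex.ofReal_ne_zero.mpr (Real.sqrt_pos.mpr (by norm_num)).ne')
      (Complex.ofReal_ne_zero.mpr (Real.sqrt_pos.mpr hpos).ne')
  constructor
  · rintro ⟨e1, e2⟩
    have hab' : a - b ≠ 0 := sub_ne_zero.mpr hab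
    have hba' : b - a ≠ 0 := sub_ne_zero.mpr (Ne.symm hab)
    have ha1' : a - 1 ≠ 0 := sub_ne_zero.mpr ha1
    have hb1' : b - 1 ≠ 0 := sub_ne_zero.mpr hb1
    field_simp at e1 e2
    have E1 : m * (a - 1) * (a - b) + 3 * (a * (a - b)) - 2 * (a * (a - 1)) = 0 := by
      linear_combination e1
    have E2 : m * (b - 1) * (b - a) + 3 * (b * (b - a)) - 2 * (b * (b - 1)) = 0 := by
      linear_combination e2
    have S : (m + 1) * (a + b) - (2 * m - 2) = 0 := by
      have h : (a - b) * ((m + 1) * (a + b) - (2 * m - 2)) = 0 := by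
        linear_combination E1 - E2
      rcases mul_eq_zero.mp h with h' | h'
      · exact absurd h' hab'
      · exact h'
    have P : 4 * (m + 2) * (a * b) - (m + 1) * (a + b) ^ 2 - 2 * (a + b) = 0 := by
      linear_combination - E1 - E2
    have hA : ((m + 1) * (m + 2) * a - (-2 + m + m ^ 2 + r))
        * ((m + 1) * (m + 2) * a - (-2 + m + m ^ 2 - r)) = 0 := by
      linear_combination ((m + 1) * (m + 2) * ((m + 2) * a - ((m + 1) * (a + b) + 2 * m) / 4)) * S
        + (-(m + 1) ^ 2 * (m + 2) / 4) * P - hr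
    have hB : ((m + 1) * (m + 2) * b - (-2 + m + m ^ 2 + r))
        * ((m + 1) * (m + 2) * b - (-2 + m + m ^ 2 - r)) = 0 := by
      linear_combination ((m + 1) * (m + 2) * ((m + 2) * b - ((m + 1) * (a + b) + 2 * m) / 4)) * S
        + (-(m + 1) ^ 2 * (m + 2) / 4) * P - hr
    rcases mul_eq_zero.mp hA with h1 | h1 <;> rcases mul_eq_zero.mp hB with h2 | h2
    · exfalso
      apply hab
      have : (m + 1) * (m + 2) * (a - b) = 0 := by linear_combination h1 - h2
      rcases mul_eq_zero.mp this with h | h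
      · exact absurd h hd
      · exact sub_eq_zero.mp h
    · left
      constructor <;> rw [eq_div_iff hd]
      · linear_combination h1
      · linear_combination h2
    · right
      constructor <;> rw [eq_div_iff hd]
      · linear_combination h2
      · linear_combination h1
    · exfalso
      apply hab
      have : (m + 1) * (m + 2) * (a - b) = 0 := by linear_combination h1 - h2
      rcases mul_eq_zero.mp this with h | h
      · exact absurd h hd
      · exact sub_eq_zero.mp h
  · have key : ∀ s : ℂ, s ^ 2 = 2 * (2 - m - m ^ 2) → ∀ x y : ℂ, x ≠ 0 → x ≠ 1 → x ≠ y →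
        x = (-2 + m + m ^ 2 + s) / ((m + 1) * (m + 2)) →
        y = (-2 + m + m ^ 2 - s) / ((m + 1) * (m + 2)) →
        m / x + 3 / (x - 1) - 2 / (x - y) = 0 := by
      intro s hs x y hx0 hx1 hxy hx hy
      have hx1' : x - 1 ≠ 0 := sub_ne_zero.mpr hx1
      have hxy' : x - y ≠ 0 := sub_ne_zero.mpr hxy
      have hu : (m + 1) * (m + 2) * x = -2 + m + m ^ 2 + s := by
        rw [hx]; field_simp
      have hv : (m + 1) * (m + 2) * y = -2 + m + m ^ 2 - s := by
        rw [hy]; field_simp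
      have hE' : ((m + 1) * (m + 2)) ^ 2
            * (m * (x - 1) * (x - y) + 3 * (x * (x - y)) - 2 * (x * (x - 1)))
          = 2 * (m + 2) * (s ^ 2 - 2 * (2 - m - m ^ 2)) := by
        linear_combination
          ((m + 1) * ((m + 1) * (m + 2) * x + (-2 + m + m ^ 2 + s))
              - (m + 3) * ((m + 1) * (m + 2) * y) + (2 - m) * ((m + 1) * (m + 2))) * hu
          + (m * (m + 1) * (m + 2) - (m + 3) * (-2 + m + m ^ 2 + s)) * hv
      rw [hs] at hE'
      have hE2 : ((m + 1) * (m + 2)) ^ 2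
          * (m * (x - 1) * (x - y) + 3 * (x * (x - y)) - 2 * (x * (x - 1))) = 0 := by
        rw [hE']; ring
      have hE : m * (x - 1) * (x - y) + 3 * (x * (x - y)) - 2 * (x * (x - 1)) = 0 :=
        (mul_eq_zero.mp hE2).resolve_left (pow_ne_zero 2 hd)
      have hfrac : m / x + 3 / (x - 1) - 2 / (x - y)
          = (m * (x - 1) * (x - y) + 3 * (x * (x - y)) - 2 * (x * (x - 1)))
            / (x * (x - 1) * (x - y)) := by
        field_simp
      rw [hfrac, hE, zero_div]
    have hrneg : (-r) ^ 2 = 2 * (2 - m - m ^ 2) := by rw [neg_pow]; simp [hr]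
    rintro (⟨ha', hb'⟩ | ⟨hb', ha'⟩)
    · refine ⟨key r hr a b ha0 ha1 hab ha' hb', key (-r) hrneg b a hb0 hb1 (Ne.symm hab) ?_ ?_⟩
      · rw [hb']; ring_nf
      · rw [ha']; ring_nf
    · refine ⟨key (-r) hrneg a b ha0 ha1 hab ?_ ?_, key r hr b a hb0 hb1 (Ne.symm hab) hb' ha'⟩
      · rw [ha']; ring_nf
      · rw [hb']; ring_nf
end

section
/- Let a ∈ ℂ ∖ {0, ±1} and q ∈ ℂ ∖ {0, ±1} with a ≠ ±q, and μ ∈ ℝ. If 2μa/(a²−1) + 2a/(a²−q²) + 1/a = 0 and a² = −(1 − μ − q²)/(3 + μ − 3q²), then the residues of the 1-form (z²−1)^μ(z²−q²)z²/(z²−a²)² dz at z = a and z = −a both vanish. -/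
open Complex

lemma residues_aux (μ : ℝ) (q b c : ℂ) (hb : b ^ 2 - 1 ∈ Complex.slitPlane)
    (hbc : b + c ≠ 0) :
    HasDerivAt (fun z : ℂ => (z ^ 2 - 1) ^ (μ : ℂ) * (z ^ 2 - q ^ 2) * z ^ 2 / (z + c) ^ 2)
      ((((((μ : ℂ) * (b ^ 2 - 1) ^ ((μ : ℂ) - 1) * (2 * b)) * (b ^ 2 - q ^ 2)
          + (b ^ 2 - 1) ^ (μ : ℂ) * (2 * b)) * b ^ 2
          + (b ^ 2 - 1) ^ (μ : ℂ) * (b ^ 2 - q ^ 2) * (2 * b)) * (b + c) ^ 2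
        - (b ^ 2 - 1) ^ (μ : ℂ) * (b ^ 2 - q ^ 2) * b ^ 2 * (2 * (b + c)))
        / ((b + c) ^ 2) ^ 2) b := by
  have hz : HasDerivAt (fun z : ℂ => z ^ 2) (2 * b) b := by
    simpa using hasDerivAt_pow 2 b
  have h1' : HasDerivAt (fun z : ℂ => z ^ 2 - 1) (2 * b) b := hz.sub_const 1
  have hf := h1'.cpow_const (c := (μ : ℂ)) hb
  have hg : HasDerivAt (fun z : ℂ => z ^ 2 - q ^ 2) (2 * b) b := hz.sub_const _
  have hd : HasDerivAt (fun z : ℂ => (z + c) ^ 2) (2 * (b + c)) b := by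
    simpa using ((hasDerivAt_id b).add_const c).fun_pow 2
  exact ((hf.mul hg).mul hz).div hd (pow_ne_zero 2 hbc)

/-- Remark A.19 (residue computation).  Let `h(z) = (z²−1)^μ(z²−q²)z²` and
consider the 1-form `ω = h(z)/((z−a)²(z+a)²) dz`, with double poles at
`z = ±a`; its residue at `z = a` is `d/dz[h(z)/(z+a)²]` at `z = a`, and its
residue at `z = −a` is `d/dz[h(z)/(z−a)²]` at `z = −a`.  If
`2μa/(a²−1) + 2a/(a²−q²) + 1/a = 0` and `a² = −(1−μ−q²)/(3+μ−3q²)`, then both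
residues vanish. -/
theorem residues_vanish_O8pi_fournoid
    (μ : ℝ)
    (a q : ℂ)
    (ha0 : a ≠ 0) (ha1 : a ≠ 1) (ham1 : a ≠ -1)
    (hq0 : q ≠ 0) (hq1 : q ≠ 1) (hqm1 : q ≠ -1)
    (haq : a ≠ q) (hamq : a ≠ -q)
    (hbranch : a ^ 2 - 1 ∈ Complex.slitPlane)
    (hden : 3 + (μ : ℂ) - 3 * q ^ 2 ≠ 0)
    (h1 : 2 * (μ : ℂ) * a / (a ^ 2 - 1) + 2 * a / (a ^ 2 - q ^ 2) + 1 / a = 0)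
    (h2 : a ^ 2 = -((1 - (μ : ℂ) - q ^ 2) / (3 + (μ : ℂ) - 3 * q ^ 2)))
    (h : ℂ → ℂ)
    (hh : ∀ z : ℂ, h z = (z ^ 2 - 1) ^ (μ : ℂ) * (z ^ 2 - q ^ 2) * z ^ 2) :
    deriv (fun z => h z / (z + a) ^ 2) a = 0
    ∧ deriv (fun z => h z / (z - a) ^ 2) (-a) = 0 := by
  have ha2 : a ^ 2 - 1 ≠ 0 := by
    have : a ^ 2 - 1 = (a - 1) * (a + 1) := by ring
    rw [this]
    exact mul_ne_zero (sub_ne_zero.2 ha1) (by simpa [sub_neg_eq_add] using sub_ne_zero.2 ham1)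
  have haq2 : a ^ 2 - q ^ 2 ≠ 0 := by
    have : a ^ 2 - q ^ 2 = (a - q) * (a + q) := by ring
    rw [this]
    exact mul_ne_zero (sub_ne_zero.2 haq) (by simpa [sub_neg_eq_add] using sub_ne_zero.2 hamq)
  -- the key polynomial identity coming from `h1`
  have key : 2 * (μ : ℂ) * a ^ 2 * (a ^ 2 - q ^ 2) + 2 * a ^ 2 * (a ^ 2 - 1)
      + (a ^ 2 - 1) * (a ^ 2 - q ^ 2) = 0 := by
    field_simp at h1
    linear_combination h1
  have hc : (a ^ 2 - 1) ^ ((μ : ℂ) - 1) = (a ^ 2 - 1) ^ (μ : ℂ) / (a ^ 2 - 1) := by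
    rw [Complex.cpow_sub _ _ ha2, Complex.cpow_one]
  constructor
  · have hfun : (fun z => h z / (z + a) ^ 2)
        = fun z : ℂ => (z ^ 2 - 1) ^ (μ : ℂ) * (z ^ 2 - q ^ 2) * z ^ 2 / (z + a) ^ 2 := by
      funext z; rw [hh]
    rw [hfun, (residues_aux μ q a a hbranch (by simpa [two_mul] using mul_ne_zero two_ne_zero ha0)).deriv]
    rw [div_eq_zero_iff]; left
    rw [hc]
    field_simp
    linear_combination (4 * a ^ 3 * (a ^ 2 - 1) ^ (μ : ℂ)) * key
  · have hfun : (fun z => h z / (z - a) ^ 2)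
        = fun z : ℂ => (z ^ 2 - 1) ^ (μ : ℂ) * (z ^ 2 - q ^ 2) * z ^ 2 / (z + -a) ^ 2 := by
      funext z
      rw [hh, show z - a = z + -a from sub_eq_add_neg z a]
    have hb' : (-a) ^ 2 - 1 ∈ Complex.slitPlane := by rwa [neg_sq]
    have hbc' : -a + -a ≠ 0 := by
      simpa [two_mul] using neg_ne_zero.2 (mul_ne_zero two_ne_zero ha0)
    rw [hfun, (residues_aux μ q (-a) (-a) hb' hbc').deriv]
    rw [div_eq_zero_iff]; left
    simp only [show ((-a : ℂ)) ^ 2 = a ^ 2 from by ring]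
    rw [hc]
    field_simp
    linear_combination (-(4 * a ^ 3) * (a ^ 2 - 1) ^ (μ : ℂ)) * key
end
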